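/- If at each step of the process exactly the vertices along a path of length k are incremented (each vertex on the path incremented once per occurrence), and every step's path starts at a vertex of U, then the total number of increments performed over the whole run is at most c·k·|V|. -/

import Mathlib

/-- If each step increments exactly the vertices along a path of length `k` in
the graph `E` (once per occurrence), and each path starts at a vertex of the
worklist `U = {v | count v < c}`, then the total number of increments performed
over the run, which is `T * k`, is at most `c * k * |V|`. -/
theorem worklist_total_increments_bound
    {V : Type*} [Fintype V] [DecidableEq V]
    (E : V → V → Prop) (c k : ℕ) (hc : 1 ≤ c) (hk : 1 ≤ k)
    (T : ℕ) (count : ℕ → V → ℕ) (π : ℕ → Fin k → V)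
    (h0 : ∀ v, count 0 v = 0)
    (hwalk : ∀ t < T, ∀ i : Fin k, ∀ h : (i : ℕ) + 1 < k,
      E (π t i) (π t ⟨(i : ℕ) + 1, h⟩))
    (hstart : ∀ t, ∀ ht : t < T, count t (π t ⟨0, hk⟩) < c)
    (hstep : ∀ t < T, ∀ v : V,
      count (t + 1) v = count t v + (Finset.univ.filter fun i : Fin k => π t i = v).card) :
    T * k ≤ c * k * Fintype.card V := by
  classical
  set start : ℕ → V := fun t => π t ⟨0, hk⟩ with hstartdef
  -- counts are monotone up to time T
  have hmono : ∀ v : V, ∀ t t' : ℕ, t ≤ t' → t' ≤ T → count t v ≤ count t' v := by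
    intro v t t' htt' hT'
    induction t' with
    | zero =>
      have ht0 : t = 0 := Nat.le_zero.mp htt'
      simp [ht0]
    | succ n ih =>
      rcases Nat.eq_or_lt_of_le htt' with h | h
      · exact h ▸ le_rfl
      · have h1 : count t v ≤ count n v := ih (by omega) (by omega)
        have h2 := hstep n (by omega) v
        omega
  -- strict increase at a step for the start vertex
  have hstrict : ∀ t, t < T → count t (start t) + 1 ≤ count (t + 1) (start t) := by
    intro t ht
    have h2 := hstep t ht (start t)
    have hmem : (⟨0, hk⟩ : Fin k) ∈ Finset.univ.filter fun i : Fin k => π t i = start t := by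
      simp [hstartdef]
    have hcard : 1 ≤ (Finset.univ.filter fun i : Fin k => π t i = start t).card :=
      Finset.card_pos.mpr ⟨_, hmem⟩
    omega
  -- each vertex is the start of at most c steps
  have hfiber : ∀ v : V, ((Finset.range T).filter fun t => start t = v).card ≤ c := by
    intro v
    have key : ∀ a b : ℕ, a < T → start a = v → b < T → start b = v → a < b →
        count a v < count b v := by
      intro a b haT hav hbT hbv hab
      have h1 := hstrict a haT
      rw [hav] at h1
      have h2 : count (a + 1) v ≤ count b v := hmono v (a + 1) b (by omega) (by omega)
      omega
    have : ((Finset.range T).filter fun t => start t = v).card ≤ (Finset.range c).card := by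
      apply Finset.card_le_card_of_injOn (fun t => count t v)
      · intro t ht
        simp only [Finset.mem_coe, Finset.mem_filter, Finset.mem_range] at ht
        simp only [Finset.mem_coe, Finset.mem_range]
        have h2 : start t = v := ht.2
        rw [← h2]
        exact hstart t ht.1
      · intro a ha b hb hab
        simp only [Finset.mem_coe, Finset.mem_filter, Finset.mem_range] at ha hb
        have hab' : count a v = count b v := hab
        by_contra hne
        rcases Nat.lt_or_ge a b with h | h
        · have := key a b ha.1 ha.2 hb.1 hb.2 h; omega
        · have : b < a := by omega
          have := key b a hb.1 hb.2 ha.1 ha.2 this; omega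
    simpa using this
  -- sum fibers
  have hT : T ≤ c * Fintype.card V := by
    have hcardT : T = ∑ v : V, ((Finset.range T).filter fun t => start t = v).card := by
      simpa using Finset.card_eq_sum_card_fiberwise
        (f := start) (s := Finset.range T) (t := Finset.univ) (fun x _ => Finset.mem_univ _)
    calc T = ∑ v : V, ((Finset.range T).filter fun t => start t = v).card := hcardT
      _ ≤ ∑ _v : V, c := Finset.sum_le_sum fun v _ => hfiber v
      _ = Fintype.card V * c := by rw [Finset.sum_const, Finset.card_univ, smul_eq_mul]
      _ = c * Fintype.card V := Nat.mul_comm _ _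
  calc T * k ≤ (c * Fintype.card V) * k := Nat.mul_le_mul_right k hT
    _ = c * k * Fintype.card V := by ring
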